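/- Define the bilinear map Ũ : ℝ² × ℝ² → ℝ⁴ by Ũ(x, y) := (x₁y₁ + x₂y₁, x₁y₁ + x₂y₁, x₁y₂, x₂y₂), let b := (1, 1, 0, 1) ∈ ℝ⁴, and let F : ℝ² × ℝ² → ℝ be F(x, y) := (1/‖b‖²)·(½‖Ũ(x,y)‖² − ⟨b, Ũ(x,y)⟩). Let e₁ = (1,0) and e₂ = (0,1). Then: (a) Ũ(e₁, e₁) = Ũ(e₂, e₁); (b) the total derivative of F at (e₁, e₁) is zero; (c) the total derivative of F at (e₂, e₁) is nonzero. Hence a tensor represented by a stationary parameter system can also be represented by a non-stationary parameter system. -/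

import Mathlib

open scoped RealInnerProductSpace

/-- The bilinear tensor format `Ũ(x, y) = (x₁y₁ + x₂y₁, x₁y₁ + x₂y₁, x₁y₂, x₂y₂)`. -/
noncomputable def Utilde (x y : EuclideanSpace ℝ (Fin 2)) : EuclideanSpace ℝ (Fin 4) :=
  !₂[x 0 * y 0 + x 1 * y 0, x 0 * y 0 + x 1 * y 0, x 0 * y 1, x 1 * y 1]

/-- The right-hand side `b = (1, 1, 0, 1)`. -/
noncomputable def bvec : EuclideanSpace ℝ (Fin 4) := !₂[1, 1, 0, 1]

/-- The objective `F(x, y) = (1/‖b‖²)(½‖Ũ(x,y)‖² − ⟨b, Ũ(x,y)⟩)`, i.e. `f ∘ Ũ` with `A = Id`. -/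
noncomputable def Fobj (xy : EuclideanSpace ℝ (Fin 2) × EuclideanSpace ℝ (Fin 2)) : ℝ :=
  (1 / ‖bvec‖ ^ 2) * ((1 / 2) * ‖Utilde xy.1 xy.2‖ ^ 2 - ⟪bvec, Utilde xy.1 xy.2⟫)

noncomputable abbrev EE := EuclideanSpace ℝ (Fin 2)

noncomputable def cA : EE × EE →L[ℝ] ℝ := (EuclideanSpace.proj 0).comp (ContinuousLinearMap.fst ℝ EE EE)
noncomputable def cB : EE × EE →L[ℝ] ℝ := (EuclideanSpace.proj 1).comp (ContinuousLinearMap.fst ℝ EE EE)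
noncomputable def cC : EE × EE →L[ℝ] ℝ := (EuclideanSpace.proj 0).comp (ContinuousLinearMap.snd ℝ EE EE)
noncomputable def cD : EE × EE →L[ℝ] ℝ := (EuclideanSpace.proj 1).comp (ContinuousLinearMap.snd ℝ EE EE)

lemma bnorm : ‖bvec‖ ^ 2 = 3 := by
  rw [EuclideanSpace.real_norm_sq_eq]
  simp [bvec, PiLp.inner_apply, Fin.sum_univ_four]
  norm_num

lemma Fobj_eq : Fobj = fun p : EE × EE =>
    (1/3 : ℝ) * (((p.1 0 + p.1 1) * p.2 0) * ((p.1 0 + p.1 1) * p.2 0)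
      + (1/2) * ((p.1 0 * p.2 1) * (p.1 0 * p.2 1)) + (1/2) * ((p.1 1 * p.2 1) * (p.1 1 * p.2 1))
      - 2*((p.1 0 + p.1 1) * p.2 0) - p.1 1 * p.2 1) := by
  funext p
  have hU : ‖Utilde p.1 p.2‖ ^ 2 = 2*((p.1 0 + p.1 1) * p.2 0)^2 + (p.1 0 * p.2 1)^2 + (p.1 1 * p.2 1)^2 := by
    rw [EuclideanSpace.real_norm_sq_eq]
    simp [Utilde, PiLp.inner_apply, Fin.sum_univ_four]
    ring
  have hb' : ⟪bvec, Utilde p.1 p.2⟫ = 2*((p.1 0 + p.1 1) * p.2 0) + p.1 1 * p.2 1 := by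
    simp [Utilde, bvec, PiLp.inner_apply, Fin.sum_univ_four]
    ring
  rw [Fobj, bnorm, hU, hb']
  ring

/-- The explicit derivative of `Fobj` at a point, as a continuous linear map. -/
noncomputable def grad (p : EE × EE) : EE × EE →L[ℝ] ℝ :=
  (1 / 3 : ℝ) •
    (((p.1 0 + p.1 1) * p.2 0) • ((p.1 0 + p.1 1) • cC + p.2 0 • (cA + cB)) +
              ((p.1 0 + p.1 1) * p.2 0) • ((p.1 0 + p.1 1) • cC + p.2 0 • (cA + cB)) +
            (1 / 2 : ℝ) • ((p.1 0 * p.2 1) • (p.1 0 • cD + p.2 1 • cA) + (p.1 0 * p.2 1) • (p.1 0 • cD + p.2 1 • cA)) +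
          (1 / 2 : ℝ) • ((p.1 1 * p.2 1) • (p.1 1 • cD + p.2 1 • cB) + (p.1 1 * p.2 1) • (p.1 1 • cD + p.2 1 • cB)) -
        (2 : ℝ) • ((p.1 0 + p.1 1) • cC + p.2 0 • (cA + cB)) -
      (p.1 1 • cD + p.2 1 • cB))

lemma fderiv_Fobj (p : EE × EE) : fderiv ℝ Fobj p = grad p := by
  have hA : HasFDerivAt (fun q : EE × EE => q.1 0) cA p := cA.hasFDerivAt
  have hB : HasFDerivAt (fun q : EE × EE => q.1 1) cB p := cB.hasFDerivAt
  have hC : HasFDerivAt (fun q : EE × EE => q.2 0) cC p := cC.hasFDerivAt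
  have hD : HasFDerivAt (fun q : EE × EE => q.2 1) cD p := cD.hasFDerivAt
  have hs := (hA.add hB).mul hC
  have ht := hA.mul hD
  have hu := hB.mul hD
  have hd := (((((hs.mul hs).add
      ((ht.mul ht).const_mul (1/2 : ℝ))).add
      ((hu.mul hu).const_mul (1/2 : ℝ))).sub
      (hs.const_mul 2)).sub hu) |>.const_mul (1/3 : ℝ)
  rw [Fobj_eq]
  exact hd.fderiv

lemma grad_apply (p : EE × EE) (v : EE × EE) :
    grad p v = (1/3) * ((2 * ((p.1 0 + p.1 1) * p.2 0) - 2) * ((v.1 0 + v.1 1) * p.2 0 + (p.1 0 + p.1 1) * v.2 0)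
      + (p.1 0 * p.2 1) * (v.1 0 * p.2 1 + p.1 0 * v.2 1)
      + (p.1 1 * p.2 1 - 1) * (v.1 1 * p.2 1 + p.1 1 * v.2 1)) := by
  simp [grad, cA, cB, cC, cD, ContinuousLinearMap.smul_apply, ContinuousLinearMap.add_apply,
    ContinuousLinearMap.sub_apply, ContinuousLinearMap.comp_apply]
  ring

/-- The counterexample of Section 4: (a) `Ũ(e₁, e₁) = Ũ(e₂, e₁)`, (b) the total derivative of
`F` at `(e₁, e₁)` vanishes, (c) the total derivative of `F` at `(e₂, e₁)` does not vanish.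
Hence a tensor represented by a stationary parameter system can also be represented by a
non-stationary one. -/
theorem stmt_16 :
    Utilde !₂[1, 0] !₂[1, 0] = Utilde !₂[0, 1] !₂[1, 0] ∧
      fderiv ℝ Fobj (!₂[1, 0], !₂[1, 0]) = 0 ∧
      fderiv ℝ Fobj (!₂[0, 1], !₂[1, 0]) ≠ 0 := by
  refine ⟨?_, ?_, ?_⟩
  · ext i
    fin_cases i <;> simp [Utilde]
  · rw [fderiv_Fobj]
    refine ContinuousLinearMap.ext fun v => ?_
    rw [grad_apply]
    norm_num [Matrix.cons_val_zero, Matrix.cons_val_one]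
  · rw [fderiv_Fobj]
    intro h
    have h2 := DFunLike.congr_fun h ((0 : EE), (!₂[0, 1] : EE))
    rw [grad_apply] at h2
    norm_num [Matrix.cons_val_zero, Matrix.cons_val_one] at h2
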